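/- The family of cyclic almost-interval partitions, consisting of non-crossing partitions π of [n] such that removing all singletons of π yields a cyclic-interval partition, is singleton-inductive. -/
import Mathlib


attribute [local instance] Classical.propDecidable

instance {α : Type*} [Finite α] : Finite (Setoid α) :=
  Finite.of_injective (fun s : Setoid α => s.r)
    (fun a b h => Setoid.ext fun x y => by rw [show a.r = b.r from h])

noncomputable instance {α : Type*} [Finite α] : Fintype (Setoid α) :=
  Fintype.ofFinite _

/-- A set partition of `{0,...,n-1}` (encoded as a `Setoid (Fin n)`) is an *interval
partition* iff each of its blocks consists of consecutive integers. -/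
def IsIntervalSetoid {n : ℕ} (s : Setoid (Fin n)) : Prop :=
  ∀ a b c : Fin n, a ≤ b → b ≤ c → s.r a c → s.r a b

/-- A set partition is *non-crossing* iff there are no `a < b < c < d` with `a, c` in one
block and `b, d` in a different block. -/
def IsNoncrossing {n : ℕ} (s : Setoid (Fin n)) : Prop :=
  ∀ a b c d : Fin n, a < b → b < c → c < d → s.r a c → s.r b d → s.r a b

/-- A subset of `Fin n` is a *cyclic interval* iff it consists of cyclically consecutive
residues mod `n`. -/
def IsCyclicInterval {n : ℕ} (B : Set (Fin n)) : Prop :=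
  ∃ (b : Fin n) (k : ℕ), B = {x | ∃ i ≤ k, x = ((finRotate n) ^ i) b}

/-- A set partition of `Fin n` is a *cyclic-interval partition* iff all of its blocks are
cyclic intervals. -/
def IsCyclicIntervalSetoid {n : ℕ} (s : Setoid (Fin n)) : Prop :=
  ∀ a : Fin n, IsCyclicInterval {x | s.r a x}

/-- The singleton-insertion map `Ψ^n_r` : it inserts a singleton block at position `r`,
shifting the rest of the partition. -/
def insertSingleton {n : ℕ} (r : Fin (n + 1)) (s : Setoid (Fin n)) : Setoid (Fin (n + 1)) where
  r a b := (a = r ∧ b = r) ∨ ∃ i j : Fin n, a = r.succAbove i ∧ b = r.succAbove j ∧ s.r i j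
  iseqv := by
    constructor
    · intro a
      rcases eq_or_ne a r with h | h
      · exact Or.inl ⟨h, h⟩
      · obtain ⟨i, hi⟩ := Fin.exists_succAbove_eq h
        exact Or.inr ⟨i, i, hi.symm, hi.symm, s.refl i⟩
    · rintro a b (⟨h1, h2⟩ | ⟨i, j, h1, h2, h3⟩)
      · exact Or.inl ⟨h2, h1⟩
      · exact Or.inr ⟨j, i, h2, h1, s.symm h3⟩
    · rintro a b c (⟨h1, h2⟩ | ⟨i, j, h1, h2, h3⟩) (⟨g1, g2⟩ | ⟨k, l, g1, g2, g3⟩)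
      · exact Or.inl ⟨h1, g2⟩
      · exact absurd (g1.symm.trans h2) (Fin.succAbove_ne r k)
      · exact absurd (h2.symm.trans g1) (Fin.succAbove_ne r j)
      · have hjk : j = k := Fin.succAbove_right_injective (h2.symm.trans g1)
        exact Or.inr ⟨i, l, h1, g2, s.trans h3 (hjk ▸ g3)⟩

/-- The elements of `Fin n` that do NOT form singleton blocks of `s`. -/
noncomputable def nonSingletons {n : ℕ} (s : Setoid (Fin n)) : Finset (Fin n) :=
  Finset.univ.filter fun x => ∃ y, y ≠ x ∧ s.r x y

/-- `RS s` removes all singleton blocks of the partition `s` and relabels the remaining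
elements in an order-preserving way. -/
noncomputable def RS {n : ℕ} (s : Setoid (Fin n)) : Setoid (Fin (nonSingletons s).card) where
  r i j := s.r ((nonSingletons s).orderIsoOfFin rfl i).1 ((nonSingletons s).orderIsoOfFin rfl j).1
  iseqv := ⟨fun i => s.refl _, fun h => s.symm h, fun h h' => s.trans h h'⟩

/-- An *almost-interval* partition: non-crossing, and removing the singleton blocks yields
an interval partition. -/
def IsAlmostInterval {n : ℕ} (s : Setoid (Fin n)) : Prop :=
  IsNoncrossing s ∧ IsIntervalSetoid (RS s)

/-- A *cyclic almost-interval* partition: non-crossing, and removing the singleton blocks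
yields a cyclic-interval partition. -/
def IsAlmostCyclicInterval {n : ℕ} (s : Setoid (Fin n)) : Prop :=
  IsNoncrossing s ∧ IsCyclicIntervalSetoid (RS s)

/-- The number of crossings of a set partition: the number of quadruples `a < b < c < d`
with `a ~ c`, `b ~ d` lying in two different blocks. -/
noncomputable def crossNum {n : ℕ} (s : Setoid (Fin n)) : ℕ :=
  Finset.card (Finset.univ.filter fun p : Fin n × Fin n × Fin n × Fin n =>
    p.1 < p.2.1 ∧ p.2.1 < p.2.2.1 ∧ p.2.2.1 < p.2.2.2 ∧
      s.r p.1 p.2.2.1 ∧ s.r p.2.1 p.2.2.2 ∧ ¬ s.r p.1 p.2.1)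

/-- `{r}` is a singleton block of the partition `s`. -/
def IsSingletonBlock {n : ℕ} (r : Fin n) (s : Setoid (Fin n)) : Prop :=
  ∀ y, s.r r y → y = r

/-- The partition `{{1,2},{3},...,{n}}` (in `Fin n` indexing: block `{0,1}`, rest singletons). -/
def pairBlockFirst (n : ℕ) : Setoid (Fin n) where
  r x y := x = y ∨ ((x : ℕ) < 2 ∧ (y : ℕ) < 2)
  iseqv := by
    refine ⟨fun x => Or.inl rfl, ?_, ?_⟩
    · rintro x y (rfl | h)
      · exact Or.inl rfl
      · exact Or.inr ⟨h.2, h.1⟩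
    · rintro x y z (rfl | h) h'
      · exact h'
      · rcases h' with rfl | h'
        · exact Or.inr h
        · exact Or.inr ⟨h.1, h'.2⟩

/-- The partition of `Fin n` whose blocks are the singleton `{k}` and its complement. -/
def singletonAt {n : ℕ} (k : Fin n) : Setoid (Fin n) where
  r x y := x = y ∨ (x ≠ k ∧ y ≠ k)
  iseqv := by
    refine ⟨fun x => Or.inl rfl, ?_, ?_⟩
    · rintro x y (rfl | h)
      · exact Or.inl rfl
      · exact Or.inr ⟨h.2, h.1⟩
    · rintro x y z (rfl | h) h'
      · exact h'
      · rcases h' with rfl | h'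
        · exact Or.inr h
        · exact Or.inr ⟨h.1, h'.2⟩

/-- The order embedding `Fin (n - m) → Fin n` that skips the `m` positions `j, ..., j+m-1`. -/
def skipEmb {n : ℕ} (m j : ℕ) (h : j + m ≤ n) (i : Fin (n - m)) : Fin n :=
  ⟨if (i : ℕ) < j then (i : ℕ) else (i : ℕ) + m, by have := i.isLt; split <;> omega⟩


section Aux

variable {n : ℕ} (r : Fin (n + 1)) (s : Setoid (Fin n))

/-- Deleting the singleton at `r`. -/
def deleteAt {n : ℕ} (r : Fin (n + 1)) (σ : Setoid (Fin (n + 1))) : Setoid (Fin n) where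
  r i j := σ.r (r.succAbove i) (r.succAbove j)
  iseqv := ⟨fun _ => σ.refl _, fun h => σ.symm h, fun h h' => σ.trans h h'⟩

lemma insert_rel_succAbove {i j : Fin n} :
    (insertSingleton r s).r (r.succAbove i) (r.succAbove j) ↔ s.r i j := by
  constructor
  · rintro (⟨h1, _⟩ | ⟨i', j', h1, h2, h3⟩)
    · exact absurd h1 (Fin.succAbove_ne r i)
    · have : i = i' := Fin.succAbove_right_injective h1
      have : j = j' := Fin.succAbove_right_injective h2
      subst ‹i = i'›; subst ‹j = j'›; exact h3
  · intro h; exact Or.inr ⟨i, j, rfl, rfl, h⟩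

lemma deleteAt_insertSingleton : deleteAt r (insertSingleton r s) = s :=
  Setoid.ext fun i j => insert_rel_succAbove r s

lemma singletonBlock_insert : IsSingletonBlock r (insertSingleton r s) := by
  rintro y (⟨_, h2⟩ | ⟨i, j, h1, _, _⟩)
  · exact h2
  · exact absurd h1.symm (Fin.succAbove_ne r i)

lemma insert_deleteAt {σ : Setoid (Fin (n + 1))} (hσ : IsSingletonBlock r σ) :
    insertSingleton r (deleteAt r σ) = σ := by
  refine Setoid.ext fun a b => ⟨?_, ?_⟩
  · rintro (⟨rfl, rfl⟩ | ⟨i, j, rfl, rfl, h3⟩)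
    · exact σ.refl _
    · exact h3
  · intro h
    rcases eq_or_ne a r with rfl | ha
    · exact Or.inl ⟨rfl, hσ b h⟩
    rcases eq_or_ne b r with rfl | hb
    · exact absurd (hσ a (σ.symm h)) ha
    obtain ⟨i, rfl⟩ := Fin.exists_succAbove_eq ha
    obtain ⟨j, rfl⟩ := Fin.exists_succAbove_eq hb
    exact Or.inr ⟨i, j, rfl, rfl, h⟩

lemma noncrossing_insert_iff :
    IsNoncrossing (insertSingleton r s) ↔ IsNoncrossing s := by
  constructor
  · intro H i j k l hij hjk hkl hik hjl
    have := H (r.succAbove i) (r.succAbove j) (r.succAbove k) (r.succAbove l)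
      (r.succAboveOrderEmb.strictMono hij) (r.succAboveOrderEmb.strictMono hjk)
      (r.succAboveOrderEmb.strictMono hkl)
      ((insert_rel_succAbove r s).2 hik) ((insert_rel_succAbove r s).2 hjl)
    exact (insert_rel_succAbove r s).1 this
  · intro H a b c d hab hbc hcd hac hbd
    rcases hac with ⟨rfl, rfl⟩ | ⟨i, k, rfl, rfl, hik⟩
    · exact absurd (lt_trans hab hbc) (lt_irrefl _)
    rcases hbd with ⟨rfl, rfl⟩ | ⟨j, l, rfl, rfl, hjl⟩
    · exact absurd (lt_trans hbc hcd) (lt_irrefl _)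
    have hij : i < j := r.succAboveOrderEmb.lt_iff_lt.1 hab
    have hjk : j < k := r.succAboveOrderEmb.lt_iff_lt.1 hbc
    have hkl : k < l := r.succAboveOrderEmb.lt_iff_lt.1 hcd
    exact Or.inr ⟨i, j, rfl, rfl, H i j k l hij hjk hkl hik hjl⟩

lemma nonSingletons_insert :
    nonSingletons (insertSingleton r s)
      = (nonSingletons s).map ⟨r.succAbove, r.succAbove_right_injective⟩ := by
  ext x
  simp only [nonSingletons, Finset.mem_filter, Finset.mem_univ, true_and, Finset.mem_map,
    Function.Embedding.coeFn_mk]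
  constructor
  · rintro ⟨y, hy, hxy⟩
    rcases eq_or_ne x r with hx | hx
    · rw [hx] at hy hxy
      exact absurd (singletonBlock_insert r s y hxy) hy
    obtain ⟨i, rfl⟩ := Fin.exists_succAbove_eq hx
    refine ⟨i, ⟨?_, rfl⟩⟩
    rcases eq_or_ne y r with hy' | hy'
    · have hxr := singletonBlock_insert r s _ ((insertSingleton r s).symm (hy' ▸ hxy))
      exact absurd hxr hx
    obtain ⟨j, rfl⟩ := Fin.exists_succAbove_eq hy'
    exact ⟨j, fun h => hy (by rw [h]), (insert_rel_succAbove r s).1 hxy⟩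
  · rintro ⟨i, ⟨j, hj, hij⟩, rfl⟩
    exact ⟨r.succAbove j, fun h => hj (r.succAbove_right_injective h),
      (insert_rel_succAbove r s).2 hij⟩

lemma card_nonSingletons_insert :
    (nonSingletons (insertSingleton r s)).card = (nonSingletons s).card := by
  rw [nonSingletons_insert, Finset.card_map]

lemma orderEmbOfFin_insert :
    ∀ i : Fin (nonSingletons (insertSingleton r s)).card,
      (nonSingletons (insertSingleton r s)).orderEmbOfFin rfl i
        = r.succAbove ((nonSingletons s).orderEmbOfFin rfl
            (Fin.cast (card_nonSingletons_insert r s) i)) := by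
  have h : (nonSingletons s).card = (nonSingletons (insertSingleton r s)).card :=
    (card_nonSingletons_insert r s).symm
  have key : (fun i : Fin (nonSingletons (insertSingleton r s)).card =>
      r.succAbove ((nonSingletons s).orderEmbOfFin rfl (Fin.cast (card_nonSingletons_insert r s) i)))
      = (nonSingletons (insertSingleton r s)).orderEmbOfFin rfl := by
    apply Finset.orderEmbOfFin_unique
    · intro x
      have hmem : r.succAbove ((nonSingletons s).orderEmbOfFin rfl
          (Fin.cast (card_nonSingletons_insert r s) x))
          ∈ (nonSingletons s).map ⟨r.succAbove, r.succAbove_right_injective⟩ :=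
        Finset.mem_map_of_mem _ (Finset.orderEmbOfFin_mem _ _ _)
      rwa [← nonSingletons_insert r s] at hmem
    · intro a b hab
      exact r.succAboveOrderEmb.strictMono
        (((nonSingletons s).orderEmbOfFin rfl).strictMono (by simpa using hab))
  intro i
  exact (congrFun key i).symm

lemma cyclic_transfer {k k' : ℕ} (h : k = k') {s : Setoid (Fin k)} {s' : Setoid (Fin k')}
    (hr : ∀ i j, s.r i j ↔ s'.r (Fin.cast h i) (Fin.cast h j)) :
    IsCyclicIntervalSetoid s ↔ IsCyclicIntervalSetoid s' := by
  subst h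
  have : s = s' := Setoid.ext fun i j => by simpa using hr i j
  rw [this]

lemma cyclic_insert_iff :
    IsCyclicIntervalSetoid (RS (insertSingleton r s)) ↔ IsCyclicIntervalSetoid (RS s) := by
  refine (cyclic_transfer (card_nonSingletons_insert r s) fun i j => ?_)
  show (insertSingleton r s).r _ _ ↔ s.r _ _
  rw [Finset.coe_orderIsoOfFin_apply, Finset.coe_orderIsoOfFin_apply,
    Finset.coe_orderIsoOfFin_apply, Finset.coe_orderIsoOfFin_apply,
    orderEmbOfFin_insert r s i, orderEmbOfFin_insert r s j]
  exact insert_rel_succAbove r s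

lemma almostCyclic_insert_iff :
    IsAlmostCyclicInterval (insertSingleton r s) ↔ IsAlmostCyclicInterval s := by
  unfold IsAlmostCyclicInterval
  rw [noncrossing_insert_iff, cyclic_insert_iff]

lemma insert_le_insert_iff {s t : Setoid (Fin n)} :
    insertSingleton r s ≤ insertSingleton r t ↔ s ≤ t := by
  constructor
  · intro H
    rw [Setoid.le_def]
    intro i j hij
    exact (insert_rel_succAbove r t).1
      (Setoid.le_def.1 H ((insert_rel_succAbove r s).2 hij))
  · intro H
    rw [Setoid.le_def]
    rintro a b (⟨ha, hb⟩ | ⟨i, j, rfl, rfl, hij⟩)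
    · exact Or.inl ⟨ha, hb⟩
    · exact Or.inr ⟨i, j, rfl, rfl, Setoid.le_def.1 H hij⟩

end Aux

theorem almostCyclicInterval_singletonInductive (n : ℕ) (hn : 1 ≤ n) (r : Fin (n + 1)) :
    ∃ e : {s : Setoid (Fin n) // IsAlmostCyclicInterval s} ≃o
        {σ : Setoid (Fin (n + 1)) // IsAlmostCyclicInterval σ ∧ IsSingletonBlock r σ},
      ∀ π : {s : Setoid (Fin n) // IsAlmostCyclicInterval s},
        (e π).val = insertSingleton r π.val := by
  refine ⟨{ toFun := fun π => ⟨insertSingleton r π.val,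
              (almostCyclic_insert_iff r π.val).2 π.2, singletonBlock_insert r π.val⟩
            invFun := fun σ => ⟨deleteAt r σ.val, by
              have h := insert_deleteAt r σ.2.2
              have := σ.2.1
              rw [← h] at this
              exact (almostCyclic_insert_iff r _).1 this⟩
            left_inv := fun π => Subtype.ext (deleteAt_insertSingleton r π.val)
            right_inv := fun σ => Subtype.ext (insert_deleteAt r σ.2.2)
            map_rel_iff' := fun {a b} => insert_le_insert_iff r }, fun π => rfl⟩
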